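/- Let Γ be a finite simple graph each of whose edges is colored with one of six colors 1,…,6, and let C_i denote the number of edges of color i. Fix a rainbow 6-edge-coloring χ of K4, let H be the number of 4-vertex subsets of Γ inducing a complete graph whose edge coloring is isomorphic to χ, and let a and a' be the χ-colors of some pair of opposite (vertex-disjoint) edges of K4. Then H^2 is at most the product of C_i over the four colors i not in {a, a'}. -/

import Mathlib

open scoped Classical

noncomputable section

namespace RainbowK4

variable {V : Type*} [Fintype V]

/-- The finset of edges of `Γ` having color `c` among the six colors `Fin 6`. -/
def colorEdges6 (Γ : SimpleGraph V) (col : Sym2 V → Fin 6) (c : Fin 6) : Finset (Sym2 V) :=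
  Finset.univ.filter (fun e => e ∈ Γ.edgeSet ∧ col e = c)

/-- `χ` is a rainbow 6-edge-coloring of `K₄` (on vertex set `Fin 4`): distinct edges
(non-diagonal elements of `Sym2 (Fin 4)`) receive distinct colors. -/
def IsRainbowK4Coloring (χ : Sym2 (Fin 4) → Fin 6) : Prop :=
  ∀ e e' : Sym2 (Fin 4), ¬e.IsDiag → ¬e'.IsDiag → χ e = χ e' → e = e'

/-- The 4-vertex subsets of `Γ` inducing a complete graph whose edge coloring is
isomorphic to `χ`. -/
def chiCopies (Γ : SimpleGraph V) (col : Sym2 V → Fin 6) (χ : Sym2 (Fin 4) → Fin 6) :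
    Finset (Finset V) :=
  Finset.univ.filter (fun s => ∃ f : Fin 4 → V, Function.Injective f ∧
    s = Finset.univ.image f ∧
    ∀ i j : Fin 4, i ≠ j → Γ.Adj (f i) (f j) ∧ col s(f i, f j) = χ s(i, j))

private lemma fin4_distinct : ∀ i j k l : Fin 4, ({i, j, k, l} : Finset (Fin 4)) = Finset.univ →
    i ≠ j ∧ i ≠ k ∧ i ≠ l ∧ j ≠ k ∧ j ≠ l ∧ k ≠ l := by decide

private lemma pairEq {x y z w : V} (h : s(x, y) = s(z, w)) :
    ({x, y} : Finset V) = {z, w} := by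
  rcases Sym2.eq_iff.mp h with ⟨h1, h2⟩ | ⟨h1, h2⟩ <;> subst h1 <;> subst h2
  · rfl
  · exact Finset.pair_comm _ _

private lemma key (Γ : SimpleGraph V) (col : Sym2 V → Fin 6) (χ : Sym2 (Fin 4) → Fin 6)
    (p q r t : Fin 4) (hpq : p ≠ q) (hrt : r ≠ t)
    (huniv : ({p, q, r, t} : Finset (Fin 4)) = Finset.univ) :
    (chiCopies Γ col χ).card ≤
      (colorEdges6 Γ col (χ s(p, q))).card * (colorEdges6 Γ col (χ s(r, t))).card := by
  classical
  rcases Finset.eq_empty_or_nonempty (chiCopies Γ col χ) with he | ⟨s0, hs0⟩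
  · simp [he]
  have hV : Nonempty V := by
    obtain ⟨f, -, -, -⟩ := (Finset.mem_filter.mp hs0).2
    exact ⟨f 0⟩
  haveI : Nonempty (Sym2 V) := ⟨s(hV.some, hV.some)⟩
  set P : Finset V → Prop := fun s => ∃ f : Fin 4 → V, Function.Injective f ∧
    s = Finset.univ.image f ∧
    ∀ i j : Fin 4, i ≠ j → Γ.Adj (f i) (f j) ∧ col s(f i, f j) = χ s(i, j) with hP
  have hmemP : ∀ s ∈ chiCopies Γ col χ, P s := fun s hs => (Finset.mem_filter.mp hs).2
  set φ : Finset V → Sym2 V × Sym2 V := fun s =>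
    if h : P s then (s(h.choose p, h.choose q), s(h.choose r, h.choose t))
    else Classical.arbitrary _ with hφ
  have hsdesc : ∀ (s : Finset V) (h : P s),
      s = ({h.choose p, h.choose q} : Finset V) ∪ {h.choose r, h.choose t} := by
    intro s h
    obtain ⟨-, hs, -⟩ := h.choose_spec
    have hy : ∀ y : Fin 4, y = p ∨ y = q ∨ y = r ∨ y = t := by
      intro y
      have hmem : y ∈ ({p, q, r, t} : Finset (Fin 4)) := huniv ▸ Finset.mem_univ y
      simpa using hmem
    conv_lhs => rw [hs]
    ext x
    simp only [Finset.mem_image, Finset.mem_univ, true_and, Finset.mem_union,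
      Finset.mem_insert, Finset.mem_singleton]
    constructor
    · rintro ⟨y, rfl⟩
      rcases hy y with rfl | rfl | rfl | rfl <;> tauto
    · rintro ((rfl | rfl) | (rfl | rfl)) <;> exact ⟨_, rfl⟩
  rw [← Finset.card_product]
  apply Finset.card_le_card_of_injOn φ
  · intro s hs
    have h : P s := hmemP s hs
    obtain ⟨hinj, -, hprop⟩ := h.choose_spec
    simp only [hφ, dif_pos h]
    rw [Finset.mem_coe, Finset.mem_product]
    constructor <;> rw [colorEdges6, Finset.mem_filter]
    · exact ⟨Finset.mem_univ _, (hprop p q hpq).1, (hprop p q hpq).2⟩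
    · exact ⟨Finset.mem_univ _, (hprop r t hrt).1, (hprop r t hrt).2⟩
  · intro s1 h1m s2 h2m heq
    have h1 : P s1 := hmemP s1 h1m
    have h2 : P s2 := hmemP s2 h2m
    simp only [hφ, dif_pos h1, dif_pos h2, Prod.mk.injEq] at heq
    rw [hsdesc s1 h1, hsdesc s2 h2, pairEq heq.1, pairEq heq.2]

/-- If `χ` is a fixed rainbow 6-edge-coloring of `K₄`, `H` counts the copies of `K₄`
in a 6-edge-colored graph `Γ` colored isomorphically to `χ`, and `a`, `a'` are the
`χ`-colors of some pair of opposite (vertex-disjoint) edges of `K₄`, then `H²` is at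
most the product of the numbers of edges of `Γ` of the four remaining colors. -/
theorem stmt18 (Γ : SimpleGraph V) (col : Sym2 V → Fin 6)
    (χ : Sym2 (Fin 4) → Fin 6) (hχ : IsRainbowK4Coloring χ)
    (C : Fin 6 → ℕ) (hC : ∀ i, C i = (colorEdges6 Γ col i).card)
    (H : ℕ) (hH : H = (chiCopies Γ col χ).card)
    (a a' : Fin 6)
    (hopp : ∃ i j k l : Fin 4, ({i, j, k, l} : Finset (Fin 4)) = Finset.univ ∧
      χ s(i, j) = a ∧ χ s(k, l) = a') :
    H ^ 2 ≤ ∏ i ∈ Finset.univ.filter (fun i : Fin 6 => i ≠ a ∧ i ≠ a'), C i := by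
  classical
  obtain ⟨i, j, k, l, huniv, ha, ha'⟩ := hopp
  obtain ⟨hij, hik, hil, hjk, hjl, hkl⟩ := fin4_distinct i j k l huniv
  subst ha ha' hH
  -- the four remaining colors
  set c1 := χ s(i, k) with hc1
  set c2 := χ s(j, l) with hc2
  set c3 := χ s(i, l) with hc3
  set c4 := χ s(j, k) with hc4
  have colNe : ∀ p q r t : Fin 4, p ≠ q → r ≠ t → s(p, q) ≠ s(r, t) →
      χ s(p, q) ≠ χ s(r, t) := by
    intro p q r t hpq hrt hedge hcol
    exact hedge (hχ _ _ (by simp [Sym2.mk_isDiag_iff, hpq])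
      (by simp [Sym2.mk_isDiag_iff, hrt]) hcol)
  have hne : ∀ p q r t : Fin 4, p ≠ q → r ≠ t →
      ¬((p = r ∧ q = t) ∨ (p = t ∧ q = r)) → χ s(p, q) ≠ χ s(r, t) := by
    intro p q r t hpq hrt h
    exact colNe p q r t hpq hrt (by simp [Sym2.eq_iff]; tauto)
  have n12 : c1 ≠ c2 := hne i k j l hik hjl (by tauto)
  have n13 : c1 ≠ c3 := hne i k i l hik hil (by tauto)
  have n14 : c1 ≠ c4 := hne i k j k hik hjk (by tauto)
  have n23 : c2 ≠ c3 := hne j l i l hjl hil (by tauto)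
  have n24 : c2 ≠ c4 := hne j l j k hjl hjk (by tauto)
  have n34 : c3 ≠ c4 := hne i l j k hil hjk (by tauto)
  have n1a : c1 ≠ χ s(i, j) := hne i k i j hik hij (by tauto)
  have n1b : c1 ≠ χ s(k, l) := hne i k k l hik hkl (by tauto)
  have n2a : c2 ≠ χ s(i, j) := hne j l i j hjl hij (by tauto)
  have n2b : c2 ≠ χ s(k, l) := hne j l k l hjl hkl (by tauto)
  have n3a : c3 ≠ χ s(i, j) := hne i l i j hil hij (by tauto)
  have n3b : c3 ≠ χ s(k, l) := hne i l k l hil hkl (by tauto)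
  have n4a : c4 ≠ χ s(i, j) := hne j k i j hjk hij (by tauto)
  have n4b : c4 ≠ χ s(k, l) := hne j k k l hjk hkl (by tauto)
  have nab : χ s(i, j) ≠ χ s(k, l) := hne i j k l hij hkl (by tauto)
  -- the filter set is exactly {c1, c2, c3, c4}
  have hfilter : Finset.univ.filter (fun x : Fin 6 => x ≠ χ s(i, j) ∧ x ≠ χ s(k, l)) =
      ({c1, c2, c3, c4} : Finset (Fin 6)) := by
    have hsub : ({c1, c2, c3, c4} : Finset (Fin 6)) ⊆
        Finset.univ.filter (fun x : Fin 6 => x ≠ χ s(i, j) ∧ x ≠ χ s(k, l)) := by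
      intro x hx
      simp only [Finset.mem_insert, Finset.mem_singleton] at hx
      rw [Finset.mem_filter]
      rcases hx with rfl | rfl | rfl | rfl
      · exact ⟨Finset.mem_univ _, n1a, n1b⟩
      · exact ⟨Finset.mem_univ _, n2a, n2b⟩
      · exact ⟨Finset.mem_univ _, n3a, n3b⟩
      · exact ⟨Finset.mem_univ _, n4a, n4b⟩
    refine (Finset.eq_of_subset_of_card_le hsub ?_).symm
    have hcard4 : ({c1, c2, c3, c4} : Finset (Fin 6)).card = 4 := by
      rw [Finset.card_insert_of_notMem (by simp [n12, n13, n14]),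
        Finset.card_insert_of_notMem (by simp [n23, n24]),
        Finset.card_insert_of_notMem (by simp [n34]), Finset.card_singleton]
    have hsd : Finset.univ.filter (fun x : Fin 6 => x ≠ χ s(i, j) ∧ x ≠ χ s(k, l)) =
        Finset.univ \ ({χ s(i, j), χ s(k, l)} : Finset (Fin 6)) := by
      ext x; simp [and_comm]
    rw [hcard4, hsd, Finset.card_sdiff_of_subset (Finset.subset_univ _), Finset.card_pair nab]
    simp
  rw [hfilter, Finset.prod_insert (by simp [n12, n13, n14]),
    Finset.prod_insert (by simp [n23, n24]), Finset.prod_insert (by simp [n34]),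
    Finset.prod_singleton]
  have bound1 : (chiCopies Γ col χ).card ≤
      (colorEdges6 Γ col c1).card * (colorEdges6 Γ col c2).card := by
    refine key Γ col χ i k j l hik hjl ?_
    rw [← huniv]; ext x; simp; tauto
  have bound2 : (chiCopies Γ col χ).card ≤
      (colorEdges6 Γ col c3).card * (colorEdges6 Γ col c4).card := by
    refine key Γ col χ i l j k hil hjk ?_
    rw [← huniv]; ext x; simp; tauto
  calc (chiCopies Γ col χ).card ^ 2
      = (chiCopies Γ col χ).card * (chiCopies Γ col χ).card := sq _
    _ ≤ ((colorEdges6 Γ col c1).card * (colorEdges6 Γ col c2).card) *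
        ((colorEdges6 Γ col c3).card * (colorEdges6 Γ col c4).card) :=
        Nat.mul_le_mul bound1 bound2
    _ = C c1 * (C c2 * (C c3 * C c4)) := by rw [hC c1, hC c2, hC c3, hC c4]; ring

end RainbowK4
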